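/- Let n ∈ ℕ, p ∈ [0,1], and k ≤ n/2. In the random graph G(n,p), the probability that there exists a vertex set S with |S| = k such that at least k vertices outside S have no neighbor in S (equivalently, |N(S)| < n − 2k) is at most C(n,k) · C(n−k,k) · (1−p)^{k²}. -/

import Mathlib

open Finset MeasureTheory
open scoped ENNReal

def graphOf {n : ℕ} (f : Sym2 (Fin n) → Bool) : SimpleGraph (Fin n) where
  Adj v w := v ≠ w ∧ f s(v, w) = true
  symm := ⟨fun v w ⟨h, hf⟩ => ⟨h.symm, by rwa [Sym2.eq_swap]⟩⟩
  loopless := ⟨fun v ⟨h, _⟩ => h rfl⟩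

instance {n : ℕ} (f : Sym2 (Fin n) → Bool) : DecidableRel (graphOf f).Adj :=
  fun v w => inferInstanceAs (Decidable (v ≠ w ∧ f s(v, w) = true))

noncomputable def gnp (n : ℕ) (p : ℝ) (hp : p ≤ 1) :
    Measure (Sym2 (Fin n) → Bool) :=
  Measure.pi fun _ =>
    (PMF.bernoulli (Real.toNNReal p) (Real.toNNReal_le_one.mpr hp)).toMeasure

lemma bern_false (p : ℝ) (hp0 : 0 ≤ p) (hp1 : p ≤ 1) :
    (PMF.bernoulli (Real.toNNReal p) (Real.toNNReal_le_one.mpr hp1)).toMeasure {false}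
      = ENNReal.ofReal (1 - p) := by
  rw [PMF.toMeasure_apply_singleton _ _ (measurableSet_singleton _), PMF.bernoulli_apply]
  simp [ENNReal.ofReal_sub _ hp0]
  rfl

lemma meas_noedges (n k : ℕ) (p : ℝ) (hp0 : 0 ≤ p) (hp1 : p ≤ 1) (S T : Finset (Fin n))
    (hd : Disjoint S T) (hS : S.card = k) (hT : T.card = k) :
    gnp n p hp1 {f | ∀ v ∈ T, ∀ s ∈ S, f s(v, s) = false}
      = ENNReal.ofReal (1 - p) ^ (k ^ 2) := by
  classical
  set A : Finset (Sym2 (Fin n)) := (T ×ˢ S).image (fun q => s(q.1, q.2)) with hA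
  have hcard : A.card = k ^ 2 := by
    rw [hA, Finset.card_image_of_injOn, Finset.card_product, hS, hT, sq]
    rintro ⟨v, s⟩ hvs ⟨v', s'⟩ hvs' h
    simp only [Finset.coe_product, Set.mem_prod, Finset.mem_coe] at hvs hvs'
    rw [Sym2.eq_iff] at h
    rcases h with ⟨rfl, rfl⟩ | ⟨h1, h2⟩
    · rfl
    · have hv : v ∈ S := by rw [show v = s' from h1]; exact hvs'.2
      exact absurd hv (Finset.disjoint_right.mp hd hvs.1)
  have hset : {f : Sym2 (Fin n) → Bool | ∀ v ∈ T, ∀ s ∈ S, f s(v, s) = false}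
      = Set.univ.pi (fun e => {b : Bool | e ∈ A → b = false}) := by
    ext f
    simp only [Set.mem_setOf_eq, Set.mem_pi, Set.mem_univ, forall_true_left, hA,
      Finset.mem_image, Finset.mem_product, Prod.exists]
    constructor
    · rintro h e ⟨v, s, ⟨hv, hs⟩, rfl⟩
      exact h v hv s hs
    · intro h v hv s hs
      exact h _ ⟨v, s, ⟨hv, hs⟩, rfl⟩
  rw [gnp, hset, Measure.pi_pi]
  have : ∀ e : Sym2 (Fin n),
      (PMF.bernoulli (Real.toNNReal p) (Real.toNNReal_le_one.mpr hp1)).toMeasure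
        {b : Bool | e ∈ A → b = false}
      = if e ∈ A then ENNReal.ofReal (1 - p) else 1 := by
    intro e
    by_cases he : e ∈ A
    · rw [show {b : Bool | e ∈ A → b = false} = {false} by ext b; simp [he],
        bern_false p hp0 hp1, if_pos he]
    · rw [show {b : Bool | e ∈ A → b = false} = Set.univ by ext b; simp [he], if_neg he]
      simp only [measure_univ]
  simp_rw [this]
  rw [Finset.prod_ite_mem, Finset.univ_inter, Finset.prod_const, hcard]

theorem gnp_bad_set_prob_le (n k : ℕ) (hk : 2 * k ≤ n) (p : ℝ) (hp0 : 0 ≤ p) (hp1 : p ≤ 1) :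
    gnp n p hp1
      {f | ∃ S : Finset (Fin n), S.card = k ∧
        k ≤ (Finset.univ.filter
              (fun v => v ∉ S ∧ ∀ s ∈ S, ¬ (graphOf f).Adj v s)).card}
    ≤ (n.choose k : ℝ≥0∞) * ((n - k).choose k : ℝ≥0∞) * ENNReal.ofReal (1 - p) ^ (k ^ 2) := by
  classical
  have hsub : {f : Sym2 (Fin n) → Bool | ∃ S : Finset (Fin n), S.card = k ∧
        k ≤ (Finset.univ.filter
              (fun v => v ∉ S ∧ ∀ s ∈ S, ¬ (graphOf f).Adj v s)).card} ⊆
      ⋃ S ∈ Finset.powersetCard k (Finset.univ : Finset (Fin n)),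
        ⋃ T ∈ Finset.powersetCard k Sᶜ,
          {f : Sym2 (Fin n) → Bool | ∀ v ∈ T, ∀ s ∈ S, f s(v, s) = false} := by
    rintro f ⟨S, hS, hcard⟩
    obtain ⟨T, hTsub, hT⟩ := Finset.exists_subset_card_eq hcard
    simp only [Set.mem_iUnion, Set.mem_setOf_eq]
    refine ⟨S, by simp [Finset.mem_powersetCard, hS], T, ?_, ?_⟩
    · rw [Finset.mem_powersetCard]
      refine ⟨fun v hv => ?_, hT⟩
      have := hTsub hv
      rw [Finset.mem_filter] at this
      simpa using this.2.1
    · intro v hv s hs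
      have hv' := hTsub hv
      rw [Finset.mem_filter] at hv'
      have hna := hv'.2.2 s hs
      have hne : v ≠ s := fun h => hv'.2.1 (h ▸ hs)
      simp only [graphOf, ne_eq, not_and] at hna
      simpa using hna hne
  refine (measure_mono hsub).trans ?_
  refine (measure_biUnion_finset_le _ _).trans ?_
  refine (Finset.sum_le_sum fun S _ => measure_biUnion_finset_le _ _).trans ?_
  have heq : ∀ S ∈ Finset.powersetCard k (Finset.univ : Finset (Fin n)),
      ∀ T ∈ Finset.powersetCard k Sᶜ,
      gnp n p hp1 {f : Sym2 (Fin n) → Bool | ∀ v ∈ T, ∀ s ∈ S, f s(v, s) = false}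
        = ENNReal.ofReal (1 - p) ^ (k ^ 2) := by
    intro S hS T hT
    rw [Finset.mem_powersetCard] at hS hT
    exact meas_noedges n k p hp0 hp1 S T
      (Finset.disjoint_left.mpr fun a ha hat =>
        (Finset.mem_compl.mp (hT.1 hat)) ha) hS.2 hT.2
  calc ∑ S ∈ Finset.powersetCard k (Finset.univ : Finset (Fin n)),
        ∑ T ∈ Finset.powersetCard k Sᶜ,
          gnp n p hp1 {f : Sym2 (Fin n) → Bool | ∀ v ∈ T, ∀ s ∈ S, f s(v, s) = false}
      = ∑ S ∈ Finset.powersetCard k (Finset.univ : Finset (Fin n)),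
        ∑ _T ∈ Finset.powersetCard k Sᶜ, ENNReal.ofReal (1 - p) ^ (k ^ 2) :=
        Finset.sum_congr rfl fun S hS => Finset.sum_congr rfl fun T hT => heq S hS T hT
    _ = (n.choose k : ℝ≥0∞) * ((n - k).choose k : ℝ≥0∞)
          * ENNReal.ofReal (1 - p) ^ (k ^ 2) := by
        simp only [Finset.sum_const, nsmul_eq_mul, Finset.card_powersetCard,
          Finset.card_compl, Finset.card_univ, Fintype.card_fin]
        have : ∀ S ∈ Finset.powersetCard k (Finset.univ : Finset (Fin n)), S.card = k :=
          fun S hS => (Finset.mem_powersetCard.mp hS).2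
        rw [Finset.sum_congr rfl fun S hS => by rw [this S hS]]
        simp [Finset.sum_const, Finset.card_powersetCard, mul_assoc]
    _ ≤ _ := le_rfl
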